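/- arXiv:2506.05956 — 7 statements merged into one kernel-verified Lean document; each statement's English description precedes it below -/
import Mathlib

section
/- Let (S, τ) be a topological semigroup. Then the following are equivalent: (a) S is a cryptogroup, each ℋ-class with the induced multiplication and the subspace topology is a topological group, and the collection of all subsets of S that are open in some ℋ-class (with its subspace topology) forms a base for τ; (b) S is a topological cryptogroup and for each x ∈ S and each open set G containing x there exists an open set U in S with x ∈ U ⊆ G ∩ H_x, where H_x is the ℋ-class of x. -/
open Set TopologicalSpace

/-- The principal left ideal (with `a` adjoined) generated by `a`: `{a} ∪ {s*a : s ∈ S}`. -/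
def leftIdeal {S : Type*} [Semigroup S] (a : S) : Set S :=
  insert a {x | ∃ s, x = s * a}

/-- The principal right ideal (with `a` adjoined) generated by `a`: `{a} ∪ {a*s : s ∈ S}`. -/
def rightIdeal {S : Type*} [Semigroup S] (a : S) : Set S :=
  insert a {x | ∃ s, x = a * s}

/-- Green's relation ℋ on a semigroup. -/
def greenH {S : Type*} [Semigroup S] (a b : S) : Prop :=
  leftIdeal a = leftIdeal b ∧ rightIdeal a = rightIdeal b

/-- The ℋ-class of an element. -/
def HClass {S : Type*} [Semigroup S] (x : S) : Set S := {y | greenH y x}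

/-- A semigroup is completely regular if every element is completely regular. -/
def CompletelyRegularSemigroup (S : Type*) [Semigroup S] : Prop :=
  ∀ a : S, ∃ x, a = a * x * a ∧ a * x = x * a

/-- Green's relation ℋ is a congruence. -/
def HIsCongruence (S : Type*) [Semigroup S] : Prop :=
  ∀ a b c : S, greenH a b → greenH (a * c) (b * c) ∧ greenH (c * a) (c * b)

/-- A cryptogroup is a completely regular semigroup in which ℋ is a congruence. -/
def IsCryptogroup (S : Type*) [Semigroup S] : Prop :=
  CompletelyRegularSemigroup S ∧ HIsCongruence S

/-- In a cryptogroup every ℋ-class is a group; `idp x` (written `x⁰`) is the identity of the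
ℋ-class of `x`, and `inv x` (written `x⁻¹`) is the inverse of `x` inside its ℋ-class. -/
structure CryptoOps (S : Type*) [Semigroup S] where
  idp : S → S
  inv : S → S
  idp_mem : ∀ x, greenH (idp x) x
  idp_mul : ∀ x y, greenH y x → idp x * y = y
  mul_idp : ∀ x y, greenH y x → y * idp x = y
  inv_mem : ∀ x, greenH (inv x) x
  mul_inv : ∀ x, x * inv x = idp x
  inv_mul : ∀ x, inv x * x = idp x

/-- The set `E(S)` of idempotents of a semigroup. -/
def idemSet (S : Type*) [Semigroup S] : Set S := {e | e * e = e}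

/-- `(xU)* = {y ∈ S : x⁻¹*y ∈ U and x⁰ = y⁰}`. -/
def lstar {S : Type*} [Semigroup S] (ops : CryptoOps S) (x : S) (U : Set S) : Set S :=
  {y | ops.inv x * y ∈ U ∧ ops.idp x = ops.idp y}

/-- `(Ux)* = {y ∈ S : y*x⁻¹ ∈ U and x⁰ = y⁰}`. -/
def rstar {S : Type*} [Semigroup S] (ops : CryptoOps S) (U : Set S) (x : S) : Set S :=
  {y | y * ops.inv x ∈ U ∧ ops.idp x = ops.idp y}

/-- `(AB)* = ⋃_{a ∈ A} (aB)*`. -/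
def setStar {S : Type*} [Semigroup S] (ops : CryptoOps S) (A B : Set S) : Set S :=
  ⋃ a ∈ A, lstar ops a B

/-- A full subcryptogroup: contains all idempotents, and closed under multiplication
and inversion. -/
def IsFullSubcryptogroup {S : Type*} [Semigroup S] (ops : CryptoOps S) (K : Set S) : Prop :=
  idemSet S ⊆ K ∧ (∀ x ∈ K, ∀ y ∈ K, x * y ∈ K) ∧ (∀ x ∈ K, ops.inv x ∈ K)

lemma greenH_refl' {S : Type*} [Semigroup S] (a : S) : greenH a a := ⟨rfl, rfl⟩

lemma greenH_symm' {S : Type*} [Semigroup S] {a b : S} (h : greenH a b) : greenH b a :=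
  ⟨h.1.symm, h.2.symm⟩

lemma greenH_trans' {S : Type*} [Semigroup S] {a b c : S} (h1 : greenH a b) (h2 : greenH b c) :
    greenH a c := ⟨h1.1.trans h2.1, h1.2.trans h2.2⟩

lemma HClass_eq' {S : Type*} [Semigroup S] {x y : S} (h : greenH y x) : HClass y = HClass x := by
  ext z
  exact ⟨fun hz => greenH_trans' hz h, fun hz => greenH_trans' hz (greenH_symm' h)⟩

lemma greenH_sq' {S : Type*} [Semigroup S] (hc : CompletelyRegularSemigroup S) (x : S) :
    greenH (x * x) x := by
  obtain ⟨a, hax, hcomm⟩ := hc x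
  have hx : x = a * (x * x) := by
    calc x = x * a * x := hax
    _ = a * x * x := by rw [hcomm]
    _ = a * (x * x) := by rw [mul_assoc]
  have hx' : x = (x * x) * a := by
    calc x = x * a * x := hax
    _ = x * (a * x) := by rw [mul_assoc]
    _ = x * (x * a) := by rw [hcomm]
    _ = x * x * a := by rw [mul_assoc]
  constructor
  · ext z
    simp only [leftIdeal, mem_insert_iff, mem_setOf_eq]
    constructor
    · rintro (rfl | ⟨s, rfl⟩)
      · exact Or.inr ⟨x, rfl⟩
      · exact Or.inr ⟨s * x, (mul_assoc s x x).symm⟩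
    · rintro (rfl | ⟨s, rfl⟩)
      · exact Or.inr ⟨a, hx⟩
      · exact Or.inr ⟨s * a, by rw [mul_assoc, ← hx]⟩
  · ext z
    simp only [rightIdeal, mem_insert_iff, mem_setOf_eq]
    constructor
    · rintro (rfl | ⟨s, rfl⟩)
      · exact Or.inr ⟨x, rfl⟩
      · exact Or.inr ⟨x * s, mul_assoc x x s⟩
    · rintro (rfl | ⟨s, rfl⟩)
      · exact Or.inr ⟨a, hx'⟩
      · exact Or.inr ⟨a * s, by rw [← mul_assoc, ← hx']⟩

/-- A topological semigroup `S` is a band of topological groups (i.e. `S` is a cryptogroup,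
each ℋ-class with the induced multiplication and subspace topology is a topological group,
and the sets open in some ℋ-class form a base for the topology) iff `S` is a topological
cryptogroup such that for each `x` and each open `G ∋ x` there is an open `U` with
`x ∈ U ⊆ G ∩ H_x`. -/
theorem stmt1 {S : Type*} [Semigroup S] [TopologicalSpace S] [ContinuousMul S]
    (ops : CryptoOps S) :
    (IsCryptogroup S ∧
      (∀ x : S, ∀ y ∈ HClass x, ∀ z ∈ HClass x, y * z ∈ HClass x) ∧
      (∀ x : S, ∀ y ∈ HClass x, ops.inv y ∈ HClass x) ∧
      (∀ x : S, ContinuousOn ops.inv (HClass x)) ∧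
      TopologicalSpace.IsTopologicalBasis
        {U : Set S | ∃ x : S, ∃ V : Set S, IsOpen V ∧ U = V ∩ HClass x}) ↔
    (IsCryptogroup S ∧ Continuous ops.inv ∧
      ∀ x : S, ∀ G : Set S, IsOpen G → x ∈ G →
        ∃ U : Set S, IsOpen U ∧ x ∈ U ∧ U ⊆ G ∩ HClass x) := by
  constructor
  · rintro ⟨hcr, _hmul, _hinv, hcont, hB⟩
    refine ⟨hcr, ?_, ?_⟩
    · rw [continuous_def]
      intro G hG
      rw [isOpen_iff_forall_mem_open]
      intro x hx
      have hwa : ContinuousWithinAt ops.inv (HClass x) x := hcont x x (greenH_refl' x)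
      have hmem : ops.inv ⁻¹' G ∈ nhdsWithin x (HClass x) :=
        hwa (hG.mem_nhds hx)
      obtain ⟨W, hWo, hxW, hsub⟩ := mem_nhdsWithin.mp hmem
      exact ⟨W ∩ HClass x, hsub, hB.isOpen ⟨x, W, hWo, rfl⟩, hxW, greenH_refl' x⟩
    · intro x G hG hx
      obtain ⟨v, hv, hxv, hvG⟩ := hB.exists_subset_of_mem_open hx hG
      obtain ⟨z, V, hVo, rfl⟩ := hv
      have : HClass z = HClass x := (HClass_eq' hxv.2).symm
      exact ⟨V ∩ HClass z, hB.isOpen ⟨z, V, hVo, rfl⟩, hxv,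
        fun y hy => ⟨hvG hy, this ▸ hy.2⟩⟩
  · rintro ⟨hcr, hinv, hnb⟩
    refine ⟨hcr, ?_, ?_, fun _ => hinv.continuousOn, ?_⟩
    · intro x y hy z hz
      have h1 : greenH (y * z) (x * z) := (hcr.2 y x z hy).1
      have h2 : greenH (x * z) (x * x) := (hcr.2 z x x hz).2
      exact greenH_trans' (greenH_trans' h1 h2) (greenH_sq' hcr.1 x)
    · intro x y hy
      exact greenH_trans' (ops.inv_mem y) hy
    · refine isTopologicalBasis_of_isOpen_of_nhds ?_ ?_
      · rintro U ⟨x, V, hV, rfl⟩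
        rw [isOpen_iff_forall_mem_open]
        intro y hy
        obtain ⟨U', hU'o, hyU', hsub⟩ := hnb y V hV hy.1
        have : HClass y = HClass x := HClass_eq' hy.2
        exact ⟨U', fun w hw => ⟨(hsub hw).1, this ▸ (hsub hw).2⟩, hU'o, hyU'⟩
      · intro a u hau hu
        obtain ⟨U, hUo, haU, hsub⟩ := hnb a u hu hau
        exact ⟨U ∩ HClass a, ⟨a, U, hUo, rfl⟩, ⟨haU, greenH_refl' a⟩,
          fun y hy => (hsub hy.1).1⟩
end

section
/- Let S be a band of topological groups. Then for every subset A of S and every open set U containing E(S), the closure of A in S is contained in (AU)*. -/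
open Set TopologicalSpace

/-- In a band of topological groups, for every `A ⊆ S` and every open `U ⊇ E(S)`,
`closure A ⊆ (AU)*`. -/
theorem stmt5 {S : Type*} [Semigroup S] [TopologicalSpace S] [ContinuousMul S]
    (ops : CryptoOps S) (hcrypt : IsCryptogroup S)
    (hinv : Continuous ops.inv) (hopen : ∀ x : S, IsOpen (HClass x))
    (A : Set S) (U : Set S) (hU : IsOpen U) (hEU : idemSet S ⊆ U) :
    closure A ⊆ setStar ops A U := by
  intro y hy
  have hcont : Continuous fun x : S => ops.inv x * y := hinv.mul continuous_const
  have hV : IsOpen (HClass y ∩ (fun x : S => ops.inv x * y) ⁻¹' U) :=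
    (hopen y).inter (hU.preimage hcont)
  have hyV : y ∈ HClass y ∩ (fun x : S => ops.inv x * y) ⁻¹' U := by
    refine ⟨⟨rfl, rfl⟩, ?_⟩
    show ops.inv y * y ∈ U
    rw [ops.inv_mul]
    exact hEU (ops.idp_mul y _ (ops.idp_mem y))
  rcases mem_closure_iff.mp hy _ hV hyV with ⟨a, ⟨haH, haU⟩, haA⟩
  refine mem_iUnion₂.mpr ⟨a, haA, haU, ?_⟩
  have h1 : greenH (ops.idp a) y :=
    ⟨(ops.idp_mem a).1.trans haH.1, (ops.idp_mem a).2.trans haH.2⟩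
  have h2 : greenH (ops.idp y) a :=
    ⟨(ops.idp_mem y).1.trans haH.1.symm, (ops.idp_mem y).2.trans haH.2.symm⟩
  have e1 : ops.idp a * ops.idp y = ops.idp y := ops.idp_mul a (ops.idp y) h2
  have e2 : ops.idp a * ops.idp y = ops.idp a := ops.mul_idp y (ops.idp a) h1
  exact e2.symm.trans e1
end

section
/- Let S be a band of topological groups and x ∈ S. If 𝓑 is a neighborhood base at x⁰ consisting of open sets, then {(xU)* : U ∈ 𝓑} is a neighborhood base at x consisting of open sets; that is, each (xU)* with U ∈ 𝓑 is an open set containing x, and for every open set W containing x there exists U ∈ 𝓑 with (xU)* ⊆ W. -/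
open Set TopologicalSpace

/-- If `𝓑` is an open neighbourhood base at `x⁰` in a band of topological groups `S`, then
`{(xU)* : U ∈ 𝓑}` is an open neighbourhood base at `x`. -/
theorem stmt6 {S : Type*} [Semigroup S] [TopologicalSpace S] [ContinuousMul S]
    (ops : CryptoOps S) (hcrypt : IsCryptogroup S)
    (hinv : Continuous ops.inv) (hopen : ∀ x : S, IsOpen (HClass x))
    (x : S) (B : Set (Set S))
    (hBopen : ∀ U ∈ B, IsOpen U)
    (hBmem : ∀ U ∈ B, ops.idp x ∈ U)
    (hBbase : ∀ W : Set S, IsOpen W → ops.idp x ∈ W → ∃ U ∈ B, U ⊆ W) :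
    (∀ U ∈ B, IsOpen (lstar ops x U) ∧ x ∈ lstar ops x U) ∧
      (∀ W : Set S, IsOpen W → x ∈ W → ∃ U ∈ B, lstar ops x U ⊆ W) := by
  have hrefl : ∀ a : S, greenH a a := fun a => ⟨rfl, rfl⟩
  have hsymm : ∀ {a b : S}, greenH a b → greenH b a := fun h => ⟨h.1.symm, h.2.symm⟩
  have htrans : ∀ {a b c : S}, greenH a b → greenH b c → greenH a c :=
    fun h h' => ⟨h.1.trans h'.1, h.2.trans h'.2⟩
  -- `idp x = idp y ↔ greenH y x`
  have hidp : ∀ y : S, ops.idp x = ops.idp y ↔ greenH y x := by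
    intro y
    constructor
    · intro h
      have h1 := ops.idp_mem x
      have h2 := ops.idp_mem y
      exact htrans (hsymm (h ▸ h2)) h1
    · intro h
      have h1 : greenH (ops.idp y) x := htrans (ops.idp_mem y) h
      have h2 : greenH (ops.idp x) y := htrans (ops.idp_mem x) (hsymm h)
      have e1 : ops.idp y * ops.idp x = ops.idp y := ops.mul_idp x (ops.idp y) h1
      have e2 : ops.idp y * ops.idp x = ops.idp x := ops.idp_mul y (ops.idp x) h2
      exact e2.symm.trans e1
  constructor
  · intro U hU
    constructor
    · have : lstar ops x U = (fun y => ops.inv x * y) ⁻¹' U ∩ HClass x := by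
        ext y
        simp only [lstar, Set.mem_setOf_eq, Set.mem_inter_iff, Set.mem_preimage, HClass]
        exact and_congr_right fun _ => hidp y
      rw [this]
      exact ((hBopen U hU).preimage (continuous_const.mul continuous_id)).inter (hopen x)
    · exact ⟨by rw [ops.inv_mul]; exact hBmem U hU, rfl⟩
  · intro W hW hxW
    have hV : IsOpen ((fun u => x * u) ⁻¹' W) :=
      hW.preimage (continuous_const.mul continuous_id)
    have hxV : ops.idp x ∈ (fun u => x * u) ⁻¹' W := by
      have : x * ops.idp x = x := ops.mul_idp x x (hrefl x)
      simpa [this] using hxW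
    obtain ⟨U, hUB, hUV⟩ := hBbase _ hV hxV
    refine ⟨U, hUB, fun y hy => ?_⟩
    have h1 : x * (ops.inv x * y) ∈ W := hUV hy.1
    have h2 : x * (ops.inv x * y) = y := by
      rw [← mul_assoc, ops.mul_inv]
      exact ops.idp_mul x y ((hidp y).mp hy.2)
    rwa [h2] at h1
end

section
/- Let S and T be bands of topological groups and let f : S → T be a semigroup homomorphism (f(x*y) = f(x)*f(y) for all x, y ∈ S). If f is continuous at each idempotent element of S, then f is continuous on all of S. -/
open Set TopologicalSpace

/-- A semigroup homomorphism between bands of topological groups which is continuous at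
every idempotent is continuous. -/
theorem stmt7 {S T : Type*} [Semigroup S] [TopologicalSpace S] [ContinuousMul S]
    [Semigroup T] [TopologicalSpace T] [ContinuousMul T]
    (opsS : CryptoOps S) (hcS : IsCryptogroup S)
    (hiS : Continuous opsS.inv) (hoS : ∀ x : S, IsOpen (HClass x))
    (opsT : CryptoOps T) (hcT : IsCryptogroup T)
    (hiT : Continuous opsT.inv) (hoT : ∀ x : T, IsOpen (HClass x))
    (f : S → T) (hf : ∀ x y : S, f (x * y) = f x * f y)
    (hcont : ∀ e : S, e * e = e → ContinuousAt f e) :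
    Continuous f := by
  rw [continuous_iff_continuousAt]
  intro a
  have he : opsS.idp a * opsS.idp a = opsS.idp a :=
    opsS.idp_mul a (opsS.idp a) (opsS.idp_mem a)
  have h1 : ContinuousAt (fun x : S => opsS.inv a * x) a :=
    (continuous_const.mul continuous_id).continuousAt
  have h2 : ContinuousAt f (opsS.inv a * a) := by
    rw [opsS.inv_mul a]; exact hcont _ he
  have hg : ContinuousAt (fun x => f a * f (opsS.inv a * x)) a :=
    continuousAt_const.mul (h2.comp h1)
  refine hg.congr ?_
  refine Filter.eventuallyEq_of_mem ((hoS a).mem_nhds ?_) ?_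
  · exact ⟨rfl, rfl⟩
  · intro x hx
    show f a * f (opsS.inv a * x) = f x
    rw [← hf, ← mul_assoc, opsS.mul_inv, opsS.idp_mul a x hx]
end

section
/- Let S be a band of topological groups. Then S is a T0 space if and only if S is a T1 space, if and only if S is a Hausdorff (T2) space; moreover, if S is Hausdorff then S is a regular space and a completely regular space. -/
open Set TopologicalSpace

section Aux

open Filter Uniformity Topology
open scoped SetRel

/-- In a pseudometric space, a point at distance `≥ ε > 0` from a set `K` can be separated
from `K` by a continuous `[0,1]`-valued function. -/
theorem bandTG_key2 {X : Type*} [PseudoMetricSpace X] {x : X} {K : Set X} {ε : ℝ} (hε : 0 < ε)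
    (hd : ∀ k ∈ K, ε ≤ dist x k) :
    ∃ f : X → unitInterval, Continuous f ∧ f x = 0 ∧ Set.EqOn f 1 K := by
  refine ⟨fun y => ⟨min 1 (dist x y / ε),
      le_min zero_le_one (div_nonneg dist_nonneg hε.le), min_le_left _ _⟩, ?_, ?_, ?_⟩
  · exact (continuous_const.min
      ((continuous_const.dist continuous_id).div_const ε)).subtype_mk _
  · apply Subtype.ext
    simp [dist_self]
  · intro k hk
    apply Subtype.ext
    have h1 : (1 : ℝ) ≤ dist x k / ε := (one_le_div hε).mpr (hd k hk)
    simpa using min_eq_left h1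

theorem bandTG_key {X : Type*} [u : UniformSpace X] [(𝓤 X).IsCountablyGenerated]
    {x : X} {K : Set X} {V : Set (X × X)} (hV : V ∈ 𝓤 X)
    (hdis : ∀ k ∈ K, k ∉ UniformSpace.ball x V) :
    ∃ f : X → unitInterval, Continuous f ∧ f x = 0 ∧ Set.EqOn f 1 K := by
  obtain ⟨m, hm⟩ : ∃ m : PseudoMetricSpace X, m.toUniformSpace.toTopologicalSpace = u.toTopologicalSpace :=
    ⟨TopologicalSpace.pseudoMetrizableSpacePseudoMetric X, rfl⟩
  have hb : UniformSpace.ball x V ∈ 𝓝 x := UniformSpace.ball_mem_nhds x hV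
  have hb' : UniformSpace.ball x V ∈ @nhds X m.toUniformSpace.toTopologicalSpace x := by
    rw [hm]; exact hb
  obtain ⟨ε, hε, hsub⟩ := (@Metric.mem_nhds_iff X m _ _).mp hb'
  have hd : ∀ k ∈ K, ε ≤ @dist X _ x k := by
    intro k hk
    by_contra h
    push_neg at h
    refine hdis k hk (hsub ?_)
    rw [@Metric.mem_ball X m]
    rwa [@dist_comm X _ k x]
  obtain ⟨f, hf, h0, h1⟩ := @bandTG_key2 X m x K ε hε hd
  refine ⟨f, ?_, h0, h1⟩
  rwa [hm] at hf

/-- Every uniform space is completely regular. -/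
theorem bandTG_uniform_completelyRegular {X : Type*} [u : UniformSpace X] :
    CompletelyRegularSpace X := by
  refine ⟨fun x K hK hxK => ?_⟩
  obtain ⟨V₀, hV₀, hball⟩ := UniformSpace.mem_nhds_iff.mp (hK.isOpen_compl.mem_nhds hxK)
  have step : ∀ W : Set (X × X), W ∈ 𝓤 X →
      ∃ W', (W' ∈ 𝓤 X ∧ SetRel.IsSymm W') ∧ W' ○ W' ⊆ W := by
    intro W hW
    obtain ⟨t, ht, hts, htc⟩ := comp_symm_mem_uniformity_sets hW
    exact ⟨t, ⟨ht, hts⟩, htc⟩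
  choose! g hg1 hg2 using step
  have hex : ∃ E : ℕ → Set (X × X), (∀ n, E n ∈ 𝓤 X ∧ SetRel.IsSymm (E n)) ∧
      (∀ n, E (n + 1) ○ E (n + 1) ⊆ E n) ∧ E 0 ⊆ V₀ := by
    refine ⟨fun n => Nat.rec (g V₀) (fun _ W => g W) n, ?_, ?_, ?_⟩
    · intro n
      induction n with
      | zero => exact hg1 V₀ hV₀
      | succ n ih => exact hg1 _ ih.1
    · intro n
      have hmem : ∀ m, (fun n => Nat.rec (g V₀) (fun _ W => g W) n : ℕ → Set (X × X)) m ∈ 𝓤 X := by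
        intro m
        induction m with
        | zero => exact (hg1 V₀ hV₀).1
        | succ m ih => exact (hg1 _ ih).1
      exact hg2 _ (hmem n)
    · rintro ⟨a, b⟩ h
      exact hg2 V₀ hV₀ ⟨a, refl_mem_uniformity (hg1 V₀ hV₀).1, h⟩
  obtain ⟨E, hmem, hcomp, hE0⟩ := hex
  clear hg1 hg2
  have hsub : ∀ n, E (n + 1) ⊆ E n := by
    rintro n ⟨a, b⟩ h
    exact hcomp n ⟨a, refl_mem_uniformity (hmem (n + 1)).1, h⟩
  have hanti : Antitone E := antitone_nat_of_succ_le hsub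
  have hB : (⨅ n, 𝓟 (E n)).HasBasis (fun _ : ℕ => True) E :=
    Filter.hasBasis_iInf_principal hanti.directed_ge
  have hrefl' : ∀ r ∈ (⨅ n, 𝓟 (E n)), ∀ a : X, (a, a) ∈ r := by
    intro r hr a
    obtain ⟨n, -, hn⟩ := hB.mem_iff.mp hr
    exact hn (refl_mem_uniformity (hmem n).1)
  have hsymm' : ∀ r ∈ (⨅ n, 𝓟 (E n)), Prod.swap ⁻¹' r ∈ (⨅ n, 𝓟 (E n)) := by
    intro r hr
    obtain ⟨n, -, hn⟩ := hB.mem_iff.mp hr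
    refine hB.mem_iff.mpr ⟨n, trivial, ?_⟩
    rintro ⟨a, b⟩ hab
    haveI := (hmem n).2; exact hn (SetRel.symm (E n) hab)
  have hcomp' : ∀ r ∈ (⨅ n, 𝓟 (E n)), ∃ t ∈ (⨅ n, 𝓟 (E n)), t ○ t ⊆ r := by
    intro r hr
    obtain ⟨n, -, hn⟩ := hB.mem_iff.mp hr
    exact ⟨E (n + 1), hB.mem_iff.mpr ⟨n + 1, trivial, Set.Subset.rfl⟩, (hcomp n).trans hn⟩
  let u' : UniformSpace X :=
    UniformSpace.ofCore (UniformSpace.Core.mk' (⨅ n, 𝓟 (E n)) hrefl' hsymm' hcomp')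
  have hcg : (𝓤[u']).IsCountablyGenerated := hB.isCountablyGenerated
  obtain ⟨f, hf, h0, h1⟩ := @bandTG_key X u' hcg x K (E 0)
    (hB.mem_iff.mpr ⟨0, trivial, Set.Subset.rfl⟩)
    (fun k hk hkb => hball (hE0 hkb) hk)
  refine ⟨f, ?_, h0, h1⟩
  have hle : u.toTopologicalSpace ≤ u'.toTopologicalSpace :=
    UniformSpace.toTopologicalSpace_mono
      (UniformSpace.le_def.mpr (le_iInf fun n => le_principal_iff.mpr (hmem n).1))
  exact continuous_le_dom hle hf

end Aux

section BandTG

open Filter Uniformity Topology Set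

variable {S : Type*} [Semigroup S]

theorem bandTG_gr_refl (a : S) : greenH a a := ⟨rfl, rfl⟩

theorem bandTG_gr_symm {a b : S} (h : greenH a b) : greenH b a := ⟨h.1.symm, h.2.symm⟩

theorem bandTG_gr_trans {a b c : S} (h1 : greenH a b) (h2 : greenH b c) : greenH a c :=
  ⟨h1.1.trans h2.1, h1.2.trans h2.2⟩

variable (ops : CryptoOps S)

theorem bandTG_idp_idem (a : S) : ops.idp a ∈ idemSet S :=
  ops.idp_mul a _ (ops.idp_mem a)

include ops in
theorem bandTG_sq_mem (hc : IsCryptogroup S) (x : S) : greenH (x * x) x := by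
  have h := (hc.2 (ops.idp x) x x (ops.idp_mem x)).1
  rw [ops.idp_mul x x (bandTG_gr_refl x)] at h
  exact bandTG_gr_symm h

include ops in
theorem bandTG_mul_mem (hc : IsCryptogroup S) {x y z : S} (hy : greenH y x) (hz : greenH z x) :
    greenH (y * z) x :=
  bandTG_gr_trans ((hc.2 y x z hy).1)
    (bandTG_gr_trans ((hc.2 z x x hz).2) (bandTG_sq_mem ops hc x))

theorem bandTG_inv_mem {x y : S} (hy : greenH y x) : greenH (ops.inv y) x :=
  bandTG_gr_trans (ops.inv_mem y) hy

theorem bandTG_idp_eq {x y : S} (hy : greenH y x) : ops.idp y = ops.idp x := by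
  have h1 : ops.idp y * ops.idp x = ops.idp y :=
    ops.mul_idp x _ (bandTG_gr_trans (ops.idp_mem y) hy)
  have h2 : ops.idp y * ops.idp x = ops.idp x :=
    ops.idp_mul y _ (bandTG_gr_trans (ops.idp_mem x) (bandTG_gr_symm hy))
  rw [← h1, h2]

theorem bandTG_idem_unique {x e : S} (he : e ∈ idemSet S) (hex : greenH e x) :
    e = ops.idp x := by
  have h1 : ops.idp e * e = ops.idp e := by
    rw [← ops.inv_mul e, mul_assoc, he]
  have h2 : ops.idp e * e = e := ops.idp_mul e e (bandTG_gr_refl e)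
  exact (h2.symm.trans h1).trans (bandTG_idp_eq ops hex)

theorem bandTG_inv_uniq {x z w : S} (hz : greenH z x) (hw : greenH w x)
    (h : z * w = ops.idp x) : w = ops.inv z := by
  calc w = ops.idp x * w := (ops.idp_mul x w hw).symm
    _ = (ops.inv z * z) * w := by rw [ops.inv_mul, bandTG_idp_eq ops hz]
    _ = ops.inv z * (z * w) := mul_assoc _ _ _
    _ = ops.inv z * ops.idp x := by rw [h]
    _ = ops.inv z := ops.mul_idp x _ (bandTG_inv_mem ops hz)

theorem bandTG_inv_inv {x p : S} (hp : greenH p x) : ops.inv (ops.inv p) = p :=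
  (bandTG_inv_uniq ops (bandTG_inv_mem ops hp) hp
    (by rw [ops.inv_mul, bandTG_idp_eq ops hp])).symm

theorem bandTG_inv_rev (hc : IsCryptogroup S) {x p q : S} (hp : greenH p x)
    (hq : greenH q x) : ops.inv (p * q) = ops.inv q * ops.inv p := by
  refine (bandTG_inv_uniq ops (bandTG_mul_mem ops hc hp hq)
    (bandTG_mul_mem ops hc (bandTG_inv_mem ops hq) (bandTG_inv_mem ops hp)) ?_).symm
  have h1 : p * q * (ops.inv q * ops.inv p) = p * (q * ops.inv q) * ops.inv p := by
    rw [mul_assoc p q _, mul_assoc p _ _, mul_assoc q _ _]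
  rw [h1, ops.mul_inv, ops.mul_idp q p (bandTG_gr_trans hp (bandTG_gr_symm hq)),
    ops.mul_inv, bandTG_idp_eq ops hp]

theorem bandTG_collapse {q r : S} (hqr : greenH r q) (p : S) :
    (ops.inv p * q) * (ops.inv q * r) = ops.inv p * r := by
  rw [mul_assoc, ← mul_assoc q, ops.mul_inv, ops.idp_mul q r hqr]

theorem bandTG_inv_idem {e : S} (he : e ∈ idemSet S) : ops.inv e = e := by
  have h1 : e = ops.idp e := bandTG_idem_unique ops he (bandTG_gr_refl e)
  exact (bandTG_inv_uniq ops (bandTG_gr_refl e) (bandTG_gr_refl e) (he.trans h1)).symm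

variable [TopologicalSpace S]

theorem bandTG_isClosed_class (hopen : ∀ x : S, IsOpen (HClass x)) (x : S) :
    IsClosed (HClass x) := by
  rw [← isOpen_compl_iff]
  have h : (HClass x)ᶜ = ⋃ y ∈ (HClass x)ᶜ, HClass y := by
    apply Set.Subset.antisymm
    · intro z hz
      exact Set.mem_biUnion hz (bandTG_gr_refl z)
    · intro z hz
      simp only [Set.mem_iUnion] at hz
      obtain ⟨y, hy, hzy⟩ := hz
      intro hzx
      exact hy (bandTG_gr_trans (bandTG_gr_symm hzy) hzx)
  rw [h]
  exact isOpen_biUnion fun y _ => hopen y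

/-- The basic entourages. -/
def bandTG_ent (V : Set S) : Set (S × S) :=
  {p | greenH p.1 p.2 ∧ ops.inv p.1 * p.2 ∈ V}

/-- The uniformity. -/
def bandTG_uni : Filter (S × S) :=
  ⨅ (V : Set S) (_ : IsOpen V ∧ idemSet S ⊆ V), 𝓟 (bandTG_ent ops V)

theorem bandTG_uni_basis :
    (bandTG_uni ops).HasBasis (fun V : Set S => IsOpen V ∧ idemSet S ⊆ V) (bandTG_ent ops) :=
  Filter.hasBasis_biInf_principal'
    (fun V hV W hW => ⟨V ∩ W, ⟨hV.1.inter hW.1, Set.subset_inter hV.2 hW.2⟩,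
      fun p hp => ⟨hp.1, hp.2.1⟩, fun p hp => ⟨hp.1, hp.2.2⟩⟩)
    ⟨Set.univ, isOpen_univ, Set.subset_univ _⟩

theorem bandTG_mem_ent_diag {V : Set S} (hV : idemSet S ⊆ V) (a : S) :
    (a, a) ∈ bandTG_ent ops V :=
  ⟨bandTG_gr_refl a, by rw [ops.inv_mul]; exact hV (bandTG_idp_idem ops a)⟩

variable [ContinuousMul S]

theorem bandTG_nhds (hcrypt : IsCryptogroup S) (hopen : ∀ x : S, IsOpen (HClass x))
    (x : S) {s : Set S} :
    s ∈ nhds x ↔ ∃ V, (IsOpen V ∧ idemSet S ⊆ V) ∧ Prod.mk x ⁻¹' bandTG_ent ops V ⊆ s := by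
  constructor
  · intro hs
    obtain ⟨o, hos, hoo, hxo⟩ := mem_nhds_iff.mp hs
    refine ⟨(HClass x)ᶜ ∪ (HClass x ∩ (fun t => x * t) ⁻¹' o), ⟨?_, ?_⟩, ?_⟩
    · exact (bandTG_isClosed_class hopen x).isOpen_compl.union
        ((hopen x).inter (hoo.preimage (continuous_const.mul continuous_id)))
    · intro e he
      by_cases hex : greenH e x
      · refine Or.inr ⟨hex, ?_⟩
        have h1 : e = ops.idp x := bandTG_idem_unique ops he hex
        have h2 : x * e = x := by rw [h1]; exact ops.mul_idp x x (bandTG_gr_refl x)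
        show x * e ∈ o
        rw [h2]; exact hxo
      · exact Or.inl hex
    · intro y hy
      have h1 : greenH (ops.inv x * y) x :=
        bandTG_mul_mem ops hcrypt (bandTG_inv_mem ops (bandTG_gr_refl x)) (bandTG_gr_symm hy.1)
      rcases hy.2 with h | h
      · exact absurd h1 h
      · have h2 : x * (ops.inv x * y) = y := by
          rw [← mul_assoc, ops.mul_inv, ops.idp_mul x y (bandTG_gr_symm hy.1)]
        have h3 : x * (ops.inv x * y) ∈ o := h.2
        rw [h2] at h3
        exact hos h3
  · rintro ⟨V, ⟨hVo, hVi⟩, hVs⟩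
    refine mem_nhds_iff.mpr ⟨Prod.mk x ⁻¹' bandTG_ent ops V, hVs, ?_, bandTG_mem_ent_diag ops hVi x⟩
    have h : Prod.mk x ⁻¹' bandTG_ent ops V = HClass x ∩ (fun y => ops.inv x * y) ⁻¹' V := by
      ext y
      exact ⟨fun hy => ⟨bandTG_gr_symm hy.1, hy.2⟩, fun hy => ⟨bandTG_gr_symm hy.1, hy.2⟩⟩
    rw [h]
    exact (hopen x).inter (hVo.preimage (continuous_const.mul continuous_id))

include ops in
theorem bandTG_half (hopen : ∀ x : S, IsOpen (HClass x)) {V : Set S} (hVo : IsOpen V)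
    (hVi : idemSet S ⊆ V) :
    ∃ V' : Set S, (IsOpen V' ∧ idemSet S ⊆ V') ∧
      ∀ a b : S, a ∈ V' → b ∈ V' → greenH a b → a * b ∈ V := by
  have key : ∀ e ∈ idemSet S, ∃ W : Set S, IsOpen W ∧ e ∈ W ∧
      ∀ a ∈ W, ∀ b ∈ W, a * b ∈ V := by
    intro e he
    have h1 : ((e, e) : S × S) ∈ (fun p : S × S => p.1 * p.2) ⁻¹' V := by
      show e * e ∈ V
      rw [he]; exact hVi he
    obtain ⟨A, B, hA, hB, heA, heB, hsub⟩ :=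
      isOpen_prod_iff.mp (hVo.preimage continuous_mul) e e h1
    exact ⟨A ∩ B, hA.inter hB, ⟨heA, heB⟩,
      fun a ha b hb => hsub (Set.mk_mem_prod ha.1 hb.2)⟩
  choose! W hWo hWm hWmul using key
  refine ⟨⋃ e ∈ idemSet S, (W e ∩ HClass e),
    ⟨isOpen_biUnion fun e he => (hWo e he).inter (hopen e),
     fun e he => Set.mem_biUnion he ⟨hWm e he, bandTG_gr_refl e⟩⟩, ?_⟩
  intro a b ha hb hab
  simp only [Set.mem_iUnion] at ha hb
  obtain ⟨e1, he1, haW, haH⟩ := ha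
  obtain ⟨e2, he2, hbW, hbH⟩ := hb
  have h1 : greenH e1 e2 := bandTG_gr_trans (bandTG_gr_symm haH) (bandTG_gr_trans hab hbH)
  have h2 : e1 = e2 := (bandTG_idem_unique ops he1 h1).trans
    (bandTG_idem_unique ops he2 (bandTG_gr_refl e2)).symm
  exact hWmul e1 he1 a haW b (h2 ▸ hbW)

end BandTG

/-- For a band of topological groups `S`: `S` is T0 iff T1 iff Hausdorff; moreover a
Hausdorff such `S` is regular and completely regular. -/
theorem stmt10 {S : Type*} [Semigroup S] [TopologicalSpace S] [ContinuousMul S]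
    (ops : CryptoOps S) (hcrypt : IsCryptogroup S)
    (hinv : Continuous ops.inv) (hopen : ∀ x : S, IsOpen (HClass x)) :
    (T0Space S ↔ T1Space S) ∧ (T1Space S ↔ T2Space S) ∧
      (T2Space S → RegularSpace S ∧ CompletelyRegularSpace S) := by
  classical
  have hrefl : ∀ r ∈ bandTG_uni ops, ∀ a : S, (a, a) ∈ r := by
    intro r hr a
    obtain ⟨V, hV, hsub⟩ := (bandTG_uni_basis ops).mem_iff.mp hr
    exact hsub (bandTG_mem_ent_diag ops hV.2 a)
  have hsymm : ∀ r ∈ bandTG_uni ops, Prod.swap ⁻¹' r ∈ bandTG_uni ops := by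
    intro r hr
    obtain ⟨V, hV, hsub⟩ := (bandTG_uni_basis ops).mem_iff.mp hr
    refine (bandTG_uni_basis ops).mem_iff.mpr ⟨V ∩ ops.inv ⁻¹' V,
      ⟨hV.1.inter (hV.1.preimage hinv), fun e he => ⟨hV.2 he, ?_⟩⟩, ?_⟩
    · show ops.inv e ∈ V
      rw [bandTG_inv_idem ops he]
      exact hV.2 he
    · rintro ⟨p, q⟩ ⟨hpq, hm, hmi⟩
      refine Set.mem_preimage.mpr (hsub ⟨bandTG_gr_symm hpq, ?_⟩)
      have h : ops.inv (ops.inv p * q) = ops.inv q * p := by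
        rw [bandTG_inv_rev ops hcrypt (bandTG_inv_mem ops (bandTG_gr_refl p))
          (bandTG_gr_symm hpq), bandTG_inv_inv ops (bandTG_gr_refl p)]
      show ops.inv q * p ∈ V
      rw [← h]
      exact hmi
  have hcompU : ∀ r ∈ bandTG_uni ops, ∃ t ∈ bandTG_uni ops, SetRel.comp t t ⊆ r := by
    intro r hr
    obtain ⟨V, hV, hsub⟩ := (bandTG_uni_basis ops).mem_iff.mp hr
    obtain ⟨V', hV', hmul⟩ := bandTG_half ops hopen hV.1 hV.2
    refine ⟨bandTG_ent ops V', (bandTG_uni_basis ops).mem_of_mem hV', ?_⟩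
    rintro ⟨p, r'⟩ ⟨q, hpq, hqr⟩
    apply hsub
    refine ⟨bandTG_gr_trans hpq.1 hqr.1, ?_⟩
    have hsp : greenH (ops.inv p * q) p :=
      bandTG_mul_mem ops hcrypt (bandTG_inv_mem ops (bandTG_gr_refl p)) (bandTG_gr_symm hpq.1)
    have htq : greenH (ops.inv q * r') q :=
      bandTG_mul_mem ops hcrypt (bandTG_inv_mem ops (bandTG_gr_refl q)) (bandTG_gr_symm hqr.1)
    have hst : greenH (ops.inv p * q) (ops.inv q * r') :=
      bandTG_gr_trans hsp (bandTG_gr_trans hpq.1 (bandTG_gr_symm htq))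
    have h := hmul _ _ hpq.2 hqr.2 hst
    rwa [bandTG_collapse ops (bandTG_gr_symm hqr.1) p] at h
  have hnhds : ∀ x : S, nhds x = Filter.comap (Prod.mk x) (bandTG_uni ops) := by
    intro x
    ext s
    rw [((bandTG_uni_basis ops).comap (Prod.mk x)).mem_iff]
    exact bandTG_nhds ops hcrypt hopen x
  let core : UniformSpace.Core S := UniformSpace.Core.mk' (bandTG_uni ops) hrefl hsymm hcompU
  letI u : UniformSpace S :=
    { toTopologicalSpace := ‹TopologicalSpace S›
      uniformity := bandTG_uni ops
      symm := core.symm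
      comp := core.comp
      nhds_eq_comap_uniformity := hnhds }
  haveI hreg : RegularSpace S := UniformSpace.to_regularSpace
  have hcr : CompletelyRegularSpace S := bandTG_uniform_completelyRegular
  have hT2 : T0Space S → T2Space S := by
    intro h
    haveI := h
    haveI : T3Space S := {}
    infer_instance
  refine ⟨⟨fun h => ?_, fun h => ?_⟩, ⟨fun h => ?_, fun h => ?_⟩, fun _ => ⟨hreg, hcr⟩⟩
  · haveI := hT2 h; infer_instance
  · haveI := h; infer_instance
  · haveI := h; exact hT2 inferInstance
  · haveI := h; infer_instance
end

section
/- A band of topological groups S is metrizable if and only if each ℋ-class of S, with the subspace topology, is metrizable. -/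
open Set TopologicalSpace

theorem greenH_equiv {S : Type*} [Semigroup S] : Equivalence (greenH (S := S)) :=
  ⟨fun _ => ⟨rfl, rfl⟩, fun h => ⟨h.1.symm, h.2.symm⟩,
   fun h h' => ⟨h.1.trans h'.1, h.2.trans h'.2⟩⟩

/-- The setoid induced by Green's relation ℋ. -/
def hSetoid (S : Type*) [Semigroup S] : Setoid S := ⟨greenH, greenH_equiv⟩

theorem metrizable_of_HClass_metrizable {S : Type*} [Semigroup S] [TopologicalSpace S]
    (hopen : ∀ x : S, IsOpen (HClass x))
    (hcls : ∀ x : S, TopologicalSpace.MetrizableSpace (HClass x)) :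
    TopologicalSpace.MetrizableSpace S := by
  letI st := hSetoid S
  let E : Quotient st → Type _ := fun q => HClass (Quotient.out q)
  haveI : ∀ q, MetrizableSpace (E q) := fun q => hcls _
  haveI hsig : MetrizableSpace (Σ q, E q) := by
    letI := fun q => TopologicalSpace.metrizableSpaceMetric (E q)
    letI : MetricSpace (Σ q, E q) := Metric.Sigma.metricSpace
    exact inferInstance
  have key : ∀ x : S, greenH x (Quotient.out (Quotient.mk st x)) :=
    fun x => greenH_equiv.symm (Quotient.mk_out (s := st) x)
  let f : S → Σ q, E q := fun x => ⟨Quotient.mk st x, ⟨x, key x⟩⟩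
  have hg : Continuous (fun p : Σ q, E q => (p.2 : S)) :=
    continuous_sigma fun q => continuous_subtype_val
  have hfc : Continuous f := by
    rw [continuous_iff_continuousAt]
    intro x
    have hU : IsOpen (HClass (Quotient.out (Quotient.mk st x))) := hopen _
    have hxU : x ∈ HClass (Quotient.out (Quotient.mk st x)) := key x
    apply ContinuousOn.continuousAt _ (hU.mem_nhds hxU)
    rw [continuousOn_iff_continuous_restrict]
    have : (HClass (Quotient.out (Quotient.mk st x))).restrict f =
        fun y : HClass (Quotient.out (Quotient.mk st x)) =>
          (⟨Quotient.mk st x, ⟨y.val, y.prop⟩⟩ : Σ q, E q) := by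
      funext y
      have h1 : Quotient.mk st y.val = Quotient.mk st x :=
        (Quotient.sound y.prop).trans (Quotient.out_eq _)
      have hs : ∀ z, z ∈ HClass ((Quotient.mk st y.val).out) ↔
          z ∈ HClass ((Quotient.mk st x).out) := by rw [h1]; exact fun z => Iff.rfl
      exact Sigma.ext h1 ((Subtype.heq_iff_coe_eq hs).mpr rfl)
    show Continuous ((HClass (Quotient.out (Quotient.mk st x))).restrict f); rw [this]
    exact continuous_sigmaMk.comp (continuous_subtype_val.subtype_mk _)
  have hemb : Topology.IsEmbedding f := by
    have hind : Topology.IsInducing f :=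
      Topology.IsInducing.of_comp hfc hg (by
        have h : (fun p : Σ q, E q => (p.2 : S)) ∘ f = id := rfl
        rw [h]; exact Topology.IsInducing.id)
    exact ⟨hind, fun a b h => congrArg (fun p : Σ q, E q => (p.2 : S)) h⟩
  exact hemb.metrizableSpace

/-- A band of topological groups is metrizable iff each ℋ-class is metrizable. -/
theorem stmt15 {S : Type*} [Semigroup S] [TopologicalSpace S] [ContinuousMul S]
    (ops : CryptoOps S) (hcrypt : IsCryptogroup S)
    (hinv : Continuous ops.inv) (hopen : ∀ x : S, IsOpen (HClass x)) :
    TopologicalSpace.MetrizableSpace S ↔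
      ∀ x : S, TopologicalSpace.MetrizableSpace (HClass x) := by
  constructor
  · intro h x
    exact inferInstance
  · intro h
    exact metrizable_of_HClass_metrizable hopen h
end

section
/- Every full subcryptogroup K of a band of topological groups S that is open as a subset of S is also closed in S. -/
open Set TopologicalSpace

/-- An open full subcryptogroup of a band of topological groups is closed. -/
theorem stmt17 {S : Type*} [Semigroup S] [TopologicalSpace S] [ContinuousMul S]
    (ops : CryptoOps S) (hcrypt : IsCryptogroup S)
    (hinv : Continuous ops.inv) (hopen : ∀ x : S, IsOpen (HClass x))
    (K : Set S) (hK : IsFullSubcryptogroup ops K) (hKopen : IsOpen K) :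
    IsClosed K := by
  obtain ⟨hE, hmul, hinvK⟩ := hK
  rw [← isOpen_compl_iff, isOpen_iff_mem_nhds]
  intro x hx
  refine mem_nhds_iff.mpr ⟨HClass x ∩ {y | x * ops.inv y ∈ K}, ?_, ?_, ?_, ?_⟩
  · intro y ⟨hyH, hyK⟩ hyKmem
    apply hx
    have h1 : (x * ops.inv y) * y ∈ K := hmul _ hyK _ hyKmem
    have h2 : (x * ops.inv y) * y = x := by
      rw [mul_assoc, ops.inv_mul y, ops.mul_idp y x ⟨hyH.1.symm, hyH.2.symm⟩]
    rwa [h2] at h1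
  · exact (hopen x).inter (hKopen.preimage (continuous_const.mul hinv))
  · exact ⟨rfl, rfl⟩
  · show x * ops.inv x ∈ K
    rw [ops.mul_inv x]
    exact hE (ops.idp_mul x (ops.idp x) (ops.idp_mem x))
end
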